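/- Let λ be a Young diagram of size n with rank(λ) = 1 (i.e. λ is a hook: λ = (m, 1, 1, …, 1)). Then there is exactly one standard Young tableau T of shape λ with Peak(T) = ∅ and exactly one standard Young tableau T of shape λ with Val(T) = ∅. -/

import Mathlib

/-- `lam/mu` is a skew shape: `lam` and `mu` are partitions (1-indexed, weakly decreasing,
with finitely many nonzero parts) with `mu ⊆ lam`. -/
def IsSkewShape (lam mu : ℕ → ℕ) : Prop :=
  (∀ i, 1 ≤ i → lam (i+1) ≤ lam i) ∧ (∀ i, 1 ≤ i → mu (i+1) ≤ mu i) ∧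
  (∀ i, mu i ≤ lam i) ∧ (∃ N, ∀ i, N ≤ i → lam i = 0)

/-- A standard Young tableau of skew shape `lam/mu` with `n` entries, recorded by the
(1-indexed) row and column of each entry `1, …, n`.  Rows are numbered from top to
bottom, columns from left to right; the cells of `lam/mu` in row `r` are the columns `c`
with `mu r < c ≤ lam r`.  Entries increase along rows and columns.  The functions `row`
and `col` are normalized to `0` outside `{1, …, n}`. -/
structure SkewSYT (lam mu : ℕ → ℕ) (n : ℕ) where
  row : ℕ → ℕ
  col : ℕ → ℕ
  row_pos : ∀ k, 1 ≤ k → k ≤ n → 1 ≤ row k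
  mem_cell : ∀ k, 1 ≤ k → k ≤ n → mu (row k) < col k ∧ col k ≤ lam (row k)
  inj' : ∀ k l, 1 ≤ k → k ≤ n → 1 ≤ l → l ≤ n → row k = row l → col k = col l → k = l
  surj' : ∀ r c, 1 ≤ r → mu r < c → c ≤ lam r → ∃ k, 1 ≤ k ∧ k ≤ n ∧ row k = r ∧ col k = c
  row_inc : ∀ k l, 1 ≤ k → k < l → l ≤ n → row k = row l → col k < col l
  col_inc : ∀ k l, 1 ≤ k → k < l → l ≤ n → col k = col l → row k < row l
  row_out : ∀ k, ¬(1 ≤ k ∧ k ≤ n) → row k = 0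
  col_out : ∀ k, ¬(1 ≤ k ∧ k ≤ n) → col k = 0

/-- The peak set of a standard Young tableau: `i` (with `2 ≤ i ≤ n-1`) is a peak when
`i-1` is an ascent (`i` is not in a lower row than `i-1`) and `i` is a descent
(`i+1` is in a strictly lower row than `i`). -/
def SkewSYT.peakSet {lam mu : ℕ → ℕ} {n : ℕ} (T : SkewSYT lam mu n) : Set ℕ :=
  {i | 2 ≤ i ∧ i + 1 ≤ n ∧ T.row i ≤ T.row (i-1) ∧ T.row i < T.row (i+1)}

/-- The valley set of a standard Young tableau: `i-1` is a descent and `i` is an ascent. -/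
def SkewSYT.valleySet {lam mu : ℕ → ℕ} {n : ℕ} (T : SkewSYT lam mu n) : Set ℕ :=
  {i | 2 ≤ i ∧ i + 1 ≤ n ∧ T.row (i-1) < T.row i ∧ T.row (i+1) ≤ T.row i}

private lemma SkewSYT.ext' {lam mu : ℕ → ℕ} {n : ℕ} {T U : SkewSYT lam mu n}
    (h1 : T.row = U.row) (h2 : T.col = U.col) : T = U := by
  cases T; cases U; cases h1; cases h2; rfl

/-- Row function of the column-first filling of a hook. -/
def rowA (n r k : ℕ) : ℕ := if 1 ≤ k ∧ k ≤ n then (if k ≤ r then k else 1) else 0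
/-- Column function of the column-first filling of a hook. -/
def colA (n r k : ℕ) : ℕ := if 1 ≤ k ∧ k ≤ n then (if k ≤ r then 1 else k + 1 - r) else 0
/-- Row function of the row-first filling of a hook. -/
def rowB (n m k : ℕ) : ℕ := if 1 ≤ k ∧ k ≤ n then (if k ≤ m then 1 else k + 1 - m) else 0
/-- Column function of the row-first filling of a hook. -/
def colB (n m k : ℕ) : ℕ := if 1 ≤ k ∧ k ≤ n then (if k ≤ m then k else 1) else 0

/-- Column-first filling of a hook: `1,…,r` down the first column, then `r+1,…,n`
along the first row. -/
def hookA (lam : ℕ → ℕ) (n r : ℕ)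
    (hr : ∀ i, 1 ≤ i → (1 ≤ lam i ↔ i ≤ r))
    (hle1 : ∀ i, 2 ≤ i → lam i ≤ 1)
    (hm1 : 1 ≤ lam 1)
    (hn : n + 1 = lam 1 + r) : SkewSYT lam (fun _ => 0) n where
  row k := rowA n r k
  col k := colA n r k
  row_pos k hk1 hkn := by
    unfold rowA; simp only [if_pos (And.intro hk1 hkn)]; split <;> omega
  mem_cell k hk1 hkn := by
    unfold rowA colA
    simp only [if_pos (And.intro hk1 hkn)]
    by_cases h : k ≤ r
    · simp only [if_pos h]
      exact ⟨Nat.zero_lt_one, (hr k hk1).2 h⟩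
    · simp only [if_neg h]
      show 0 < k + 1 - r ∧ k + 1 - r ≤ lam 1
      omega
  inj' k l hk1 hkn hl1 hln := by
    unfold rowA colA
    simp only [if_pos (And.intro hk1 hkn), if_pos (And.intro hl1 hln)]
    split <;> split <;> omega
  surj' i c hi1 hc0 hcl := by
    replace hc0 : 0 < c := hc0
    have hr1 : 1 ≤ r := (hr 1 le_rfl).1 hm1
    unfold rowA colA
    by_cases h2 : 2 ≤ i
    · have hc1 : c = 1 := by have := hle1 i h2; omega
      have hir : i ≤ r := (hr i hi1).1 (by omega)
      refine ⟨i, hi1, by omega, ?_, ?_⟩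
      · simp only [if_pos (And.intro hi1 (by omega : i ≤ n)), if_pos hir]
      · simp only [if_pos (And.intro hi1 (by omega : i ≤ n)), if_pos hir, hc1]
    · have hi : i = 1 := by omega
      subst hi
      by_cases hc : c = 1
      · refine ⟨1, le_refl 1, by omega, ?_, ?_⟩
        · simp only [if_pos (And.intro (le_refl 1) (by omega : 1 ≤ n)), if_pos hr1]
        · simp only [if_pos (And.intro (le_refl 1) (by omega : 1 ≤ n)), if_pos hr1, hc]
      · refine ⟨r + c - 1, by omega, by omega, ?_, ?_⟩
        · simp only [if_pos (And.intro (by omega : 1 ≤ r + c - 1) (by omega : r + c - 1 ≤ n)),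
            if_neg (by omega : ¬ r + c - 1 ≤ r)]
        · simp only [if_pos (And.intro (by omega : 1 ≤ r + c - 1) (by omega : r + c - 1 ≤ n)),
            if_neg (by omega : ¬ r + c - 1 ≤ r)]
          omega
  row_inc k l hk1 hkl hln := by
    unfold rowA colA
    simp only [if_pos (And.intro hk1 (by omega : k ≤ n)), if_pos (And.intro (by omega : 1 ≤ l) hln)]
    split <;> split <;> omega
  col_inc k l hk1 hkl hln := by
    unfold rowA colA
    simp only [if_pos (And.intro hk1 (by omega : k ≤ n)), if_pos (And.intro (by omega : 1 ≤ l) hln)]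
    split <;> split <;> omega
  row_out k hk := by unfold rowA; simp only [if_neg hk]
  col_out k hk := by unfold colA; simp only [if_neg hk]

/-- Row-first filling of a hook: `1,…,m` along the first row, then `m+1,…,n`
down the first column. -/
def hookB (lam : ℕ → ℕ) (n r : ℕ)
    (hr : ∀ i, 1 ≤ i → (1 ≤ lam i ↔ i ≤ r))
    (hle1 : ∀ i, 2 ≤ i → lam i ≤ 1)
    (hm1 : 1 ≤ lam 1)
    (hn : n + 1 = lam 1 + r) : SkewSYT lam (fun _ => 0) n where
  row k := rowB n (lam 1) k
  col k := colB n (lam 1) k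
  row_pos k hk1 hkn := by
    unfold rowB; simp only [if_pos (And.intro hk1 hkn)]; split <;> omega
  mem_cell k hk1 hkn := by
    unfold rowB colB
    simp only [if_pos (And.intro hk1 hkn)]
    by_cases h : k ≤ lam 1
    · simp only [if_pos h]
      exact ⟨by omega, h⟩
    · simp only [if_neg h]
      refine ⟨Nat.zero_lt_one, (hr _ (by omega)).2 (by omega)⟩
  inj' k l hk1 hkn hl1 hln := by
    unfold rowB colB
    simp only [if_pos (And.intro hk1 hkn), if_pos (And.intro hl1 hln)]
    split <;> split <;> omega
  surj' i c hi1 hc0 hcl := by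
    replace hc0 : 0 < c := hc0
    have hr1 : 1 ≤ r := (hr 1 le_rfl).1 hm1
    unfold rowB colB
    by_cases h2 : 2 ≤ i
    · have hc1 : c = 1 := by have := hle1 i h2; omega
      have hir : i ≤ r := (hr i hi1).1 (by omega)
      refine ⟨lam 1 + i - 1, by omega, by omega, ?_, ?_⟩
      · simp only [if_pos (And.intro (by omega : 1 ≤ lam 1 + i - 1) (by omega : lam 1 + i - 1 ≤ n)),
          if_neg (by omega : ¬ lam 1 + i - 1 ≤ lam 1)]
        omega
      · simp only [if_pos (And.intro (by omega : 1 ≤ lam 1 + i - 1) (by omega : lam 1 + i - 1 ≤ n)),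
          if_neg (by omega : ¬ lam 1 + i - 1 ≤ lam 1), hc1]
    · have hi : i = 1 := by omega
      subst hi
      refine ⟨c, by omega, by omega, ?_, ?_⟩
      · simp only [if_pos (And.intro (by omega : 1 ≤ c) (by omega : c ≤ n)), if_pos hcl]
      · simp only [if_pos (And.intro (by omega : 1 ≤ c) (by omega : c ≤ n)), if_pos hcl]
  row_inc k l hk1 hkl hln := by
    unfold rowB colB
    simp only [if_pos (And.intro hk1 (by omega : k ≤ n)), if_pos (And.intro (by omega : 1 ≤ l) hln)]
    split <;> split <;> omega
  col_inc k l hk1 hkl hln := by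
    unfold rowB colB
    simp only [if_pos (And.intro hk1 (by omega : k ≤ n)), if_pos (And.intro (by omega : 1 ≤ l) hln)]
    split <;> split <;> omega
  row_out k hk := by unfold rowB; simp only [if_neg hk]
  col_out k hk := by unfold colB; simp only [if_neg hk]

lemma rowA_no_peak (n r i : ℕ) (h2 : 2 ≤ i) (h3 : i + 1 ≤ n)
    (h4 : rowA n r i ≤ rowA n r (i-1)) (h5 : rowA n r i < rowA n r (i+1)) : False := by
  unfold rowA at h4 h5
  split_ifs at h4 h5 <;> omega

lemma rowB_no_valley (n m i : ℕ) (h2 : 2 ≤ i) (h3 : i + 1 ≤ n)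
    (h4 : rowB n m (i-1) < rowB n m i) (h5 : rowB n m (i+1) ≤ rowB n m i) : False := by
  unfold rowB at h4 h5
  split_ifs at h4 h5 <;> omega

lemma hookA_peak (lam : ℕ → ℕ) (n r : ℕ)
    (hr : ∀ i, 1 ≤ i → (1 ≤ lam i ↔ i ≤ r))
    (hle1 : ∀ i, 2 ≤ i → lam i ≤ 1)
    (hm1 : 1 ≤ lam 1)
    (hn : n + 1 = lam 1 + r) :
    (hookA lam n r hr hle1 hm1 hn).peakSet = ∅ := by
  rw [Set.eq_empty_iff_forall_notMem]
  intro i hi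
  exact rowA_no_peak n r i hi.1 hi.2.1 hi.2.2.1 hi.2.2.2

lemma hookB_valley (lam : ℕ → ℕ) (n r : ℕ)
    (hr : ∀ i, 1 ≤ i → (1 ≤ lam i ↔ i ≤ r))
    (hle1 : ∀ i, 2 ≤ i → lam i ≤ 1)
    (hm1 : 1 ≤ lam 1)
    (hn : n + 1 = lam 1 + r) :
    (hookB lam n r hr hle1 hm1 hn).valleySet = ∅ := by
  rw [Set.eq_empty_iff_forall_notMem]
  intro i hi
  exact rowB_no_valley n (lam 1) i hi.1 hi.2.1 hi.2.2.1 hi.2.2.2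

lemma hook_rowcol (lam : ℕ → ℕ) (n r : ℕ)
    (hr : ∀ i, 1 ≤ i → (1 ≤ lam i ↔ i ≤ r))
    (hle1 : ∀ i, 2 ≤ i → lam i ≤ 1)
    (hm1 : 1 ≤ lam 1)
    (hn : n + 1 = lam 1 + r)
    (T : SkewSYT lam (fun _ => 0) n) (hT : T.peakSet = ∅) :
    (∀ k, T.row k = rowA n r k) ∧ (∀ k, T.col k = colA n r k) := by
  have hr1 : 1 ≤ r := (hr 1 le_rfl).1 hm1
  have hrn : r ≤ n := by omega
  have hn1 : 1 ≤ n := by omega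
  -- peak-freeness
  have hpeak : ∀ i, 2 ≤ i → i + 1 ≤ n → T.row i < T.row (i+1) → T.row (i-1) < T.row i := by
    intro i h2 h3 hd
    by_contra h
    have hmem : i ∈ T.peakSet := ⟨h2, h3, by omega, hd⟩
    rw [hT] at hmem
    exact hmem
  -- basic facts
  have hrow_le : ∀ k, 1 ≤ k → k ≤ n → T.row k ≤ r := by
    intro k hk1 hkn
    have h := T.mem_cell k hk1 hkn
    have h0 : 0 < T.col k := h.1
    exact (hr _ (T.row_pos k hk1 hkn)).1 (by omega)
  have hcol1 : ∀ k, 1 ≤ k → k ≤ n → 2 ≤ T.row k → T.col k = 1 := by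
    intro k hk1 hkn h2
    have h := T.mem_cell k hk1 hkn
    have h0 : 0 < T.col k := h.1
    have h3 := hle1 _ h2
    have h4 := h.2
    omega
  have hmono2 : ∀ k l, 1 ≤ k → k < l → l ≤ n → 2 ≤ T.row k → 2 ≤ T.row l →
      T.row k < T.row l := by
    intro k l hk1 hkl hln h2k h2l
    exact T.col_inc k l hk1 hkl hln
      (by rw [hcol1 k hk1 (by omega) h2k, hcol1 l (by omega) hln h2l])
  have hrow1 : T.row 1 = 1 := by
    by_contra h
    have hp := T.row_pos 1 le_rfl hn1
    have h2 : 2 ≤ T.row 1 := by omega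
    have hc := hcol1 1 le_rfl hn1 h2
    obtain ⟨k0, hk01, hk0n, hk0r, hk0c⟩ := T.surj' 1 1 le_rfl Nat.zero_lt_one hm1
    have hne : 1 < k0 := by
      rcases Nat.lt_or_ge 1 k0 with h' | h'
      · exact h'
      · exfalso; have : k0 = 1 := by omega
        rw [this] at hk0r; omega
    have := T.col_inc 1 k0 le_rfl hne hk0n (by rw [hc, hk0c])
    rw [hk0r] at this
    omega
  -- counting
  have hcard1 : ((Finset.Icc 1 n).filter (fun k => ¬ 2 ≤ T.row k)).card ≤ lam 1 := by
    have := Finset.card_le_card_of_injOn (f := T.col)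
      (s := (Finset.Icc 1 n).filter (fun k => ¬ 2 ≤ T.row k)) (t := Finset.Icc 1 (lam 1))
      ?_ ?_
    · simpa [Nat.card_Icc] using this
    · intro k hk
      simp only [Finset.mem_coe, Finset.mem_filter, Finset.mem_Icc] at hk
      have hrk : T.row k = 1 := by have := T.row_pos k hk.1.1 hk.1.2; omega
      have h := T.mem_cell k hk.1.1 hk.1.2
      have h0 : 0 < T.col k := h.1
      have h2 := h.2
      rw [hrk] at h2
      simp only [Finset.mem_coe, Finset.mem_Icc]
      omega
    · intro k hk l hl hcol
      simp only [Finset.coe_filter, Set.mem_setOf_eq, Finset.mem_Icc] at hk hl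
      have hrk : T.row k = 1 := by have := T.row_pos k hk.1.1 hk.1.2; omega
      have hrl : T.row l = 1 := by have := T.row_pos l hl.1.1 hl.1.2; omega
      exact T.inj' k l hk.1.1 hk.1.2 hl.1.1 hl.1.2 (by rw [hrk, hrl]) hcol
  have hcard2 : ((Finset.Icc 1 n).filter (fun k => 2 ≤ T.row k)).card + 1 ≤ r := by
    have := Finset.card_le_card_of_injOn (f := T.row)
      (s := (Finset.Icc 1 n).filter (fun k => 2 ≤ T.row k)) (t := Finset.Icc 2 r)
      ?_ ?_
    · have hc : (Finset.Icc 2 r).card = r - 1 := by rw [Nat.card_Icc]; omega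
      omega
    · intro k hk
      simp only [Finset.mem_coe, Finset.mem_filter, Finset.mem_Icc] at hk
      simp only [Finset.mem_coe, Finset.mem_Icc]
      exact ⟨hk.2, hrow_le k hk.1.1 hk.1.2⟩
    · intro k hk l hl hrow
      simp only [Finset.coe_filter, Set.mem_setOf_eq, Finset.mem_Icc] at hk hl
      exact T.inj' k l hk.1.1 hk.1.2 hl.1.1 hl.1.2 hrow
        (by rw [hcol1 k hk.1.1 hk.1.2 hk.2, hcol1 l hl.1.1 hl.1.2 hl.2])
  have hsum : ((Finset.Icc 1 n).filter (fun k => 2 ≤ T.row k)).card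
      + ((Finset.Icc 1 n).filter (fun k => ¬ 2 ≤ T.row k)).card = n := by
    rw [Finset.card_filter_add_card_filter_not, Nat.card_Icc]; omega
  have hcard2' : ((Finset.Icc 1 n).filter (fun k => 2 ≤ T.row k)).card + 1 = r := by
    omega
  -- downward closure of the column set
  have hstep : ∀ k, 3 ≤ k → k ≤ n → 2 ≤ T.row k → 2 ≤ T.row (k - 1) := by
    intro k h3 hkn h2
    by_contra h
    have hp : 1 ≤ T.row (k-1) := T.row_pos (k-1) (by omega) (by omega)
    have hd : T.row (k-1) < T.row k := by omega
    have := hpeak (k-1) (by omega) (by omega) (by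
      have he : k - 1 + 1 = k := by omega
      rw [he]; exact hd)
    have hp2 : 1 ≤ T.row (k-1-1) := T.row_pos (k-1-1) (by omega) (by omega)
    omega
  have hclosed : ∀ d k, 1 ≤ k → k ≤ n → 2 ≤ T.row k → 2 ≤ k - d → 2 ≤ T.row (k - d) := by
    intro d
    induction d with
    | zero => intro k h1 h2 h3 h4; simpa using h3
    | succ d ih =>
      intro k h1 h2 h3 h4
      have h5 : 2 ≤ T.row (k - d) := ih k h1 h2 h3 (by omega)
      have h6 : k - (d+1) = (k - d) - 1 := by omega
      rw [h6]
      exact hstep (k - d) (by omega) (by omega) h5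
  have hk2 : ∀ k, 1 ≤ k → k ≤ n → 2 ≤ T.row k → 2 ≤ k := by
    intro k h1 h2 h3
    by_contra h
    have : k = 1 := by omega
    rw [this, hrow1] at h3
    omega
  -- each element of the column set gives a whole interval, hence a bound
  have hbound : ∀ k, 1 ≤ k → k ≤ n → 2 ≤ T.row k → k ≤ r := by
    intro k h1 h2 h3
    have hks : 2 ≤ k := hk2 k h1 h2 h3
    have hsub : Finset.Icc 2 k ⊆ (Finset.Icc 1 n).filter (fun j => 2 ≤ T.row j) := by
      intro j hj
      simp only [Finset.mem_Icc] at hj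
      simp only [Finset.mem_filter, Finset.mem_Icc]
      refine ⟨⟨by omega, by omega⟩, ?_⟩
      have := hclosed (k - j) k h1 h2 h3 (by omega)
      have he : k - (k - j) = j := by omega
      rwa [he] at this
    have := Finset.card_le_card hsub
    rw [Nat.card_Icc] at this
    omega
  have hchar : ∀ k, 1 ≤ k → k ≤ n → (2 ≤ T.row k ↔ (2 ≤ k ∧ k ≤ r)) := by
    intro k h1 h2
    constructor
    · intro h3; exact ⟨hk2 k h1 h2 h3, hbound k h1 h2 h3⟩
    · intro h3
      have hsub : (Finset.Icc 1 n).filter (fun j => 2 ≤ T.row j) ⊆ Finset.Icc 2 r := by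
        intro j hj
        simp only [Finset.mem_filter, Finset.mem_Icc] at hj
        simp only [Finset.mem_Icc]
        exact ⟨hk2 j hj.1.1 hj.1.2 hj.2, hbound j hj.1.1 hj.1.2 hj.2⟩
      have heq : (Finset.Icc 1 n).filter (fun j => 2 ≤ T.row j) = Finset.Icc 2 r := by
        apply Finset.eq_of_subset_of_card_le hsub
        rw [Nat.card_Icc]
        omega
      have : k ∈ (Finset.Icc 1 n).filter (fun j => 2 ≤ T.row j) := by
        rw [heq]; simp only [Finset.mem_Icc]; exact h3
      simp only [Finset.mem_filter] at this
      exact this.2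
  -- rows in the column part increase by exactly one
  have hC : ∀ k, 2 ≤ k → ∀ l, k ≤ l → l ≤ r → T.row k + (l - k) ≤ T.row l := by
    intro k hk2' l hkl
    induction l, hkl using Nat.le_induction with
    | base => intro _; omega
    | succ l hl ih =>
      intro hlr
      have h1 : T.row k + (l - k) ≤ T.row l := ih (by omega)
      have h2 : T.row l < T.row (l+1) := by
        apply hmono2 l (l+1) (by omega) (by omega) (by omega)
        · exact (hchar l (by omega) (by omega)).2 ⟨by omega, by omega⟩
        · exact (hchar (l+1) (by omega) (by omega)).2 ⟨by omega, by omega⟩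
      omega
  have hrowk : ∀ k, 2 ≤ k → k ≤ r → T.row k = k := by
    intro k h2 h3
    have ha := hC 2 le_rfl k h2 h3
    have hb := hC k h2 r h3 le_rfl
    have hc1 : 2 ≤ T.row 2 := (hchar 2 (by omega) (by omega)).2 ⟨le_rfl, by omega⟩
    have hc2 : T.row r ≤ r := hrow_le r (by omega) (by omega)
    omega
  have hrow_gt : ∀ k, r + 1 ≤ k → k ≤ n → T.row k = 1 := by
    intro k h2 h3
    have hp := T.row_pos k (by omega) h3
    have := hchar k (by omega) h3
    omega
  -- columns
  have hcol_1 : T.col 1 = 1 := by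
    obtain ⟨k0, hk01, hk0n, hk0r, hk0c⟩ := T.surj' 1 1 le_rfl Nat.zero_lt_one hm1
    have hk0 : k0 = 1 := by
      by_contra h
      have h2 : 2 ≤ k0 := by omega
      by_cases hcase : k0 ≤ r
      · have := hrowk k0 h2 hcase
        omega
      · have := T.row_inc 1 k0 le_rfl (by omega) hk0n (by rw [hrow1, hk0r])
        have hcp := T.mem_cell 1 le_rfl hn1
        have h0 : 0 < T.col 1 := hcp.1
        omega
    rw [hk0] at hk0c
    exact hk0c
  have hD : ∀ k, r + 1 ≤ k → ∀ l, k ≤ l → l ≤ n → T.col k + (l - k) ≤ T.col l := by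
    intro k hk2' l hkl
    induction l, hkl using Nat.le_induction with
    | base => intro _; omega
    | succ l hl ih =>
      intro hln
      have h1 : T.col k + (l - k) ≤ T.col l := ih (by omega)
      have h2 : T.col l < T.col (l+1) := by
        apply T.row_inc l (l+1) (by omega) (by omega) (by omega)
        rw [hrow_gt l (by omega) (by omega), hrow_gt (l+1) (by omega) (by omega)]
      omega
  have hcolk : ∀ k, r + 1 ≤ k → k ≤ n → T.col k = k + 1 - r := by
    intro k h2 h3
    have ha := hD (r+1) le_rfl k h2 h3
    have hb := hD k h2 n h3 le_rfl
    have hc1 : 2 ≤ T.col (r+1) := by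
      have := T.row_inc 1 (r+1) le_rfl (by omega) (by omega)
        (by rw [hrow1, hrow_gt (r+1) le_rfl (by omega)])
      rw [hcol_1] at this
      omega
    have hc2 : T.col n ≤ lam 1 := by
      have h := (T.mem_cell n (by omega) le_rfl).2
      rwa [hrow_gt n (by omega) le_rfl] at h
    omega
  -- conclusion
  constructor
  · intro k
    by_cases hk : 1 ≤ k ∧ k ≤ n
    · rw [rowA, if_pos hk]
      by_cases h : k ≤ r
      · rw [if_pos h]
        rcases Nat.lt_or_ge k 2 with h2 | h2
        · have : k = 1 := by omega
          rw [this, hrow1]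
        · exact hrowk k h2 h
      · rw [if_neg h]
        exact hrow_gt k (by omega) hk.2
    · rw [rowA, if_neg hk, T.row_out k hk]
  · intro k
    by_cases hk : 1 ≤ k ∧ k ≤ n
    · rw [colA, if_pos hk]
      by_cases h : k ≤ r
      · rw [if_pos h]
        rcases Nat.lt_or_ge k 2 with h2 | h2
        · have : k = 1 := by omega
          rw [this, hcol_1]
        · exact hcol1 k hk.1 hk.2 (by rw [hrowk k h2 h]; omega)
      · rw [if_neg h]
        exact hcolk k (by omega) hk.2
    · rw [colA, if_neg hk, T.col_out k hk]

lemma hook_rowcol_valley (lam : ℕ → ℕ) (n r : ℕ)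
    (hr : ∀ i, 1 ≤ i → (1 ≤ lam i ↔ i ≤ r))
    (hle1 : ∀ i, 2 ≤ i → lam i ≤ 1)
    (hm1 : 1 ≤ lam 1)
    (hn : n + 1 = lam 1 + r)
    (T : SkewSYT lam (fun _ => 0) n) (hT : T.valleySet = ∅) :
    (∀ k, T.row k = rowB n (lam 1) k) ∧ (∀ k, T.col k = colB n (lam 1) k) := by
  have hr1 : 1 ≤ r := (hr 1 le_rfl).1 hm1
  have hrn : r ≤ n := by omega
  have hmn : lam 1 ≤ n := by omega
  have hn1 : 1 ≤ n := by omega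
  have hvalley : ∀ i, 2 ≤ i → i + 1 ≤ n → T.row (i-1) < T.row i → T.row i < T.row (i+1) := by
    intro i h2 h3 hd
    by_contra h
    have hmem : i ∈ T.valleySet := ⟨h2, h3, hd, by omega⟩
    rw [hT] at hmem
    exact hmem
  have hrow_le : ∀ k, 1 ≤ k → k ≤ n → T.row k ≤ r := by
    intro k hk1 hkn
    have h := T.mem_cell k hk1 hkn
    have h0 : 0 < T.col k := h.1
    exact (hr _ (T.row_pos k hk1 hkn)).1 (by omega)
  have hcol1 : ∀ k, 1 ≤ k → k ≤ n → 2 ≤ T.row k → T.col k = 1 := by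
    intro k hk1 hkn h2
    have h := T.mem_cell k hk1 hkn
    have h0 : 0 < T.col k := h.1
    have h3 := hle1 _ h2
    have h4 := h.2
    omega
  have hmono2 : ∀ k l, 1 ≤ k → k < l → l ≤ n → 2 ≤ T.row k → 2 ≤ T.row l →
      T.row k < T.row l := by
    intro k l hk1 hkl hln h2k h2l
    exact T.col_inc k l hk1 hkl hln
      (by rw [hcol1 k hk1 (by omega) h2k, hcol1 l (by omega) hln h2l])
  have hrow1 : T.row 1 = 1 := by
    by_contra h
    have hp := T.row_pos 1 le_rfl hn1
    have h2 : 2 ≤ T.row 1 := by omega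
    have hc := hcol1 1 le_rfl hn1 h2
    obtain ⟨k0, hk01, hk0n, hk0r, hk0c⟩ := T.surj' 1 1 le_rfl Nat.zero_lt_one hm1
    have hne : 1 < k0 := by
      rcases Nat.lt_or_ge 1 k0 with h' | h'
      · exact h'
      · exfalso; have : k0 = 1 := by omega
        rw [this] at hk0r; omega
    have := T.col_inc 1 k0 le_rfl hne hk0n (by rw [hc, hk0c])
    rw [hk0r] at this
    omega
  -- counting
  have hcard1 : ((Finset.Icc 1 n).filter (fun k => ¬ 2 ≤ T.row k)).card ≤ lam 1 := by
    have := Finset.card_le_card_of_injOn (f := T.col)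
      (s := (Finset.Icc 1 n).filter (fun k => ¬ 2 ≤ T.row k)) (t := Finset.Icc 1 (lam 1))
      ?_ ?_
    · simpa [Nat.card_Icc] using this
    · intro k hk
      simp only [Finset.mem_coe, Finset.mem_filter, Finset.mem_Icc] at hk
      have hrk : T.row k = 1 := by have := T.row_pos k hk.1.1 hk.1.2; omega
      have h := T.mem_cell k hk.1.1 hk.1.2
      have h0 : 0 < T.col k := h.1
      have h2 := h.2
      rw [hrk] at h2
      simp only [Finset.mem_coe, Finset.mem_Icc]
      omega
    · intro k hk l hl hcol
      simp only [Finset.coe_filter, Set.mem_setOf_eq, Finset.mem_Icc] at hk hl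
      have hrk : T.row k = 1 := by have := T.row_pos k hk.1.1 hk.1.2; omega
      have hrl : T.row l = 1 := by have := T.row_pos l hl.1.1 hl.1.2; omega
      exact T.inj' k l hk.1.1 hk.1.2 hl.1.1 hl.1.2 (by rw [hrk, hrl]) hcol
  have hcard2 : ((Finset.Icc 1 n).filter (fun k => 2 ≤ T.row k)).card + 1 ≤ r := by
    have := Finset.card_le_card_of_injOn (f := T.row)
      (s := (Finset.Icc 1 n).filter (fun k => 2 ≤ T.row k)) (t := Finset.Icc 2 r)
      ?_ ?_
    · have hc : (Finset.Icc 2 r).card = r - 1 := by rw [Nat.card_Icc]; omega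
      omega
    · intro k hk
      simp only [Finset.mem_coe, Finset.mem_filter, Finset.mem_Icc] at hk
      simp only [Finset.mem_coe, Finset.mem_Icc]
      exact ⟨hk.2, hrow_le k hk.1.1 hk.1.2⟩
    · intro k hk l hl hrow
      simp only [Finset.coe_filter, Set.mem_setOf_eq, Finset.mem_Icc] at hk hl
      exact T.inj' k l hk.1.1 hk.1.2 hl.1.1 hl.1.2 hrow
        (by rw [hcol1 k hk.1.1 hk.1.2 hk.2, hcol1 l hl.1.1 hl.1.2 hl.2])
  have hsum : ((Finset.Icc 1 n).filter (fun k => 2 ≤ T.row k)).card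
      + ((Finset.Icc 1 n).filter (fun k => ¬ 2 ≤ T.row k)).card = n := by
    rw [Finset.card_filter_add_card_filter_not, Nat.card_Icc]; omega
  have hcard2' : ((Finset.Icc 1 n).filter (fun k => 2 ≤ T.row k)).card + 1 = r := by
    omega
  have hk2 : ∀ k, 1 ≤ k → k ≤ n → 2 ≤ T.row k → 2 ≤ k := by
    intro k h1 h2 h3
    by_contra h
    have : k = 1 := by omega
    rw [this, hrow1] at h3
    omega
  -- upward closure
  have hstep : ∀ k, 1 ≤ k → k + 1 ≤ n → 2 ≤ T.row k → 2 ≤ T.row (k + 1) := by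
    intro k h1 hkn h2
    have hks : 2 ≤ k := hk2 k h1 (by omega) h2
    have hd : T.row (k-1) < T.row k := by
      rcases Nat.lt_or_ge (T.row (k-1)) 2 with h' | h'
      · omega
      · exact hmono2 (k-1) k (by omega) (by omega) (by omega) h' h2
    have := hvalley k hks hkn hd
    omega
  have hclosed : ∀ d k, 1 ≤ k → k + d ≤ n → 2 ≤ T.row k → 2 ≤ T.row (k + d) := by
    intro d
    induction d with
    | zero => intro k h1 h2 h3; simpa using h3
    | succ d ih =>
      intro k h1 h2 h3
      have h5 : 2 ≤ T.row (k + d) := ih k h1 (by omega) h3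
      have h6 : k + (d+1) = (k + d) + 1 := by omega
      rw [h6]
      exact hstep (k + d) (by omega) (by omega) h5
  have hbound : ∀ k, 1 ≤ k → k ≤ n → 2 ≤ T.row k → lam 1 + 1 ≤ k := by
    intro k h1 h2 h3
    have hsub : Finset.Icc k n ⊆ (Finset.Icc 1 n).filter (fun j => 2 ≤ T.row j) := by
      intro j hj
      simp only [Finset.mem_Icc] at hj
      simp only [Finset.mem_filter, Finset.mem_Icc]
      refine ⟨⟨by omega, by omega⟩, ?_⟩
      have := hclosed (j - k) k h1 (by omega) h3
      have he : k + (j - k) = j := by omega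
      rwa [he] at this
    have := Finset.card_le_card hsub
    rw [Nat.card_Icc] at this
    omega
  have hchar : ∀ k, 1 ≤ k → k ≤ n → (2 ≤ T.row k ↔ lam 1 + 1 ≤ k) := by
    intro k h1 h2
    constructor
    · intro h3; exact hbound k h1 h2 h3
    · intro h3
      have hsub : (Finset.Icc 1 n).filter (fun j => 2 ≤ T.row j) ⊆ Finset.Icc (lam 1 + 1) n := by
        intro j hj
        simp only [Finset.mem_filter, Finset.mem_Icc] at hj
        simp only [Finset.mem_Icc]
        exact ⟨hbound j hj.1.1 hj.1.2 hj.2, hj.1.2⟩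
      have heq : (Finset.Icc 1 n).filter (fun j => 2 ≤ T.row j) = Finset.Icc (lam 1 + 1) n := by
        apply Finset.eq_of_subset_of_card_le hsub
        rw [Nat.card_Icc]
        omega
      have : k ∈ (Finset.Icc 1 n).filter (fun j => 2 ≤ T.row j) := by
        rw [heq]; simp only [Finset.mem_Icc]; exact ⟨h3, h2⟩
      simp only [Finset.mem_filter] at this
      exact this.2
  have hC : ∀ k, lam 1 + 1 ≤ k → ∀ l, k ≤ l → l ≤ n → T.row k + (l - k) ≤ T.row l := by
    intro k hk2' l hkl
    induction l, hkl using Nat.le_induction with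
    | base => intro _; omega
    | succ l hl ih =>
      intro hln
      have h1 : T.row k + (l - k) ≤ T.row l := ih (by omega)
      have h2 : T.row l < T.row (l+1) := by
        apply hmono2 l (l+1) (by omega) (by omega) (by omega)
        · exact (hchar l (by omega) (by omega)).2 (by omega)
        · exact (hchar (l+1) (by omega) (by omega)).2 (by omega)
      omega
  have hrowk : ∀ k, lam 1 + 1 ≤ k → k ≤ n → T.row k = k + 1 - lam 1 := by
    intro k h2 h3
    have ha := hC (lam 1 + 1) le_rfl k h2 h3
    have hb := hC k h2 n h3 le_rfl
    have hc1 : 2 ≤ T.row (lam 1 + 1) := (hchar (lam 1 + 1) (by omega) (by omega)).2 le_rfl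
    have hc2 : T.row n ≤ r := hrow_le n (by omega) le_rfl
    omega
  have hrow_le1 : ∀ k, 1 ≤ k → k ≤ lam 1 → T.row k = 1 := by
    intro k h2 h3
    have hp := T.row_pos k h2 (by omega)
    have := hchar k h2 (by omega)
    omega
  have hcol_1 : T.col 1 = 1 := by
    obtain ⟨k0, hk01, hk0n, hk0r, hk0c⟩ := T.surj' 1 1 le_rfl Nat.zero_lt_one hm1
    have hk0 : k0 = 1 := by
      by_contra h
      have h2 : 2 ≤ k0 := by omega
      by_cases hcase : k0 ≤ lam 1
      · have := T.row_inc 1 k0 le_rfl (by omega) hk0n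
          (by rw [hrow1, hk0r])
        have hcp := T.mem_cell 1 le_rfl hn1
        have h0 : 0 < T.col 1 := hcp.1
        omega
      · have := hrowk k0 (by omega) hk0n
        omega
    rw [hk0] at hk0c
    exact hk0c
  have hD : ∀ k, 1 ≤ k → ∀ l, k ≤ l → l ≤ lam 1 → T.col k + (l - k) ≤ T.col l := by
    intro k hk2' l hkl
    induction l, hkl using Nat.le_induction with
    | base => intro _; omega
    | succ l hl ih =>
      intro hln
      have h1 : T.col k + (l - k) ≤ T.col l := ih (by omega)
      have h2 : T.col l < T.col (l+1) := by
        apply T.row_inc l (l+1) (by omega) (by omega) (by omega)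
        rw [hrow_le1 l (by omega) (by omega), hrow_le1 (l+1) (by omega) (by omega)]
      omega
  have hcolk : ∀ k, 1 ≤ k → k ≤ lam 1 → T.col k = k := by
    intro k h2 h3
    have ha := hD 1 le_rfl k h2 h3
    have hb := hD k h2 (lam 1) h3 le_rfl
    have hc2 : T.col (lam 1) ≤ lam 1 := by
      have h := (T.mem_cell (lam 1) (by omega) (by omega)).2
      rwa [hrow_le1 (lam 1) (by omega) le_rfl] at h
    omega
  constructor
  · intro k
    by_cases hk : 1 ≤ k ∧ k ≤ n
    · rw [rowB, if_pos hk]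
      by_cases h : k ≤ lam 1
      · rw [if_pos h]
        exact hrow_le1 k hk.1 h
      · rw [if_neg h]
        exact hrowk k (by omega) hk.2
    · rw [rowB, if_neg hk, T.row_out k hk]
  · intro k
    by_cases hk : 1 ≤ k ∧ k ≤ n
    · rw [colB, if_pos hk]
      by_cases h : k ≤ lam 1
      · rw [if_pos h]
        exact hcolk k hk.1 h
      · rw [if_neg h]
        exact hcol1 k hk.1 hk.2 (by rw [hrowk k (by omega) hk.2]; omega)
    · rw [colB, if_neg hk, T.col_out k hk]

theorem stmt13 (lam : ℕ → ℕ) (n : ℕ)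
    (hlam : ∀ i, 1 ≤ i → lam (i+1) ≤ lam i)
    (h1 : 1 ≤ lam 1) (h2 : lam 2 ≤ 1)
    (hsize : ∃ N, (∀ i, N < i → lam i = 0) ∧ (∑ i ∈ Finset.Icc 1 N, lam i) = n) :
    (∃! T : SkewSYT lam (fun _ => 0) n, T.peakSet = ∅) ∧
    (∃! T : SkewSYT lam (fun _ => 0) n, T.valleySet = ∅) := by
  have hmono : ∀ i j, 1 ≤ i → i ≤ j → lam j ≤ lam i := by
    intro i j hi hij
    induction j, hij using Nat.le_induction with
    | base => exact le_rfl
    | succ j hj ih => exact le_trans (hlam j (by omega)) ih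
  have hle1 : ∀ i, 2 ≤ i → lam i ≤ 1 := fun i hi => le_trans (hmono 2 i (by omega) hi) h2
  obtain ⟨N, hN0, hNs⟩ := hsize
  have hN1 : 1 ≤ N := by
    by_contra h
    have := hN0 1 (by omega)
    omega
  obtain ⟨r, hr1, hlamr, hrN, hgtN⟩ :
      ∃ r, 1 ≤ r ∧ 1 ≤ lam r ∧ r ≤ N ∧ ∀ i, r < i → i ≤ N → ¬ 1 ≤ lam i :=
    ⟨Nat.findGreatest (fun i => 1 ≤ lam i) N,
      Nat.le_findGreatest hN1 h1,
      Nat.findGreatest_spec (P := fun i => 1 ≤ lam i) hN1 h1,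
      Nat.findGreatest_le N,
      fun i hi hiN => Nat.findGreatest_is_greatest (P := fun i => 1 ≤ lam i) hi hiN⟩
  have hgt : ∀ i, r < i → lam i = 0 := by
    intro i hi
    by_cases h : i ≤ N
    · have := hgtN i hi h
      omega
    · exact hN0 i (by omega)
  have hr : ∀ i, 1 ≤ i → (1 ≤ lam i ↔ i ≤ r) := by
    intro i hi
    constructor
    · intro h
      by_contra hc
      have := hgt i (by omega)
      omega
    · intro h
      exact le_trans hlamr (hmono i r hi h)
  have hn : n + 1 = lam 1 + r := by
    have hIcc : Finset.Icc 1 N = Finset.Ioc 0 N := by rw [← Finset.Icc_add_one_left_eq_Ioc, zero_add]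
    rw [hIcc] at hNs
    have e1 : (∑ i ∈ Finset.Ioc 0 r, lam i) + ∑ i ∈ Finset.Ioc r N, lam i
        = ∑ i ∈ Finset.Ioc 0 N, lam i :=
      Finset.sum_Ioc_consecutive _ (by omega) hrN
    have e2 : (∑ i ∈ Finset.Ioc 0 1, lam i) + ∑ i ∈ Finset.Ioc 1 r, lam i
        = ∑ i ∈ Finset.Ioc 0 r, lam i :=
      Finset.sum_Ioc_consecutive _ (by omega) hr1
    have e3 : ∑ i ∈ Finset.Ioc r N, lam i = 0 := by
      apply Finset.sum_eq_zero
      intro i hi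
      rw [Finset.mem_Ioc] at hi
      exact hgt i hi.1
    have e4 : ∑ i ∈ Finset.Ioc 0 1, lam i = lam 1 := by
      rw [← Finset.Icc_add_one_left_eq_Ioc, zero_add, Finset.Icc_self, Finset.sum_singleton]
    have e5 : ∑ i ∈ Finset.Ioc 1 r, lam i = r - 1 := by
      rw [Finset.sum_congr rfl (fun i hi => by
        rw [Finset.mem_Ioc] at hi
        have ha := hle1 i (by omega)
        have hb := (hr i (by omega)).2 hi.2
        omega : ∀ i ∈ Finset.Ioc 1 r, lam i = 1)]
      simp [Nat.card_Ioc]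
    omega
  constructor
  · refine ⟨hookA lam n r hr hle1 h1 hn, hookA_peak lam n r hr hle1 h1 hn, ?_⟩
    intro T hT
    obtain ⟨hrw, hcl⟩ := hook_rowcol lam n r hr hle1 h1 hn T hT
    exact SkewSYT.ext' (funext fun k => hrw k) (funext fun k => hcl k)
  · refine ⟨hookB lam n r hr hle1 h1 hn, hookB_valley lam n r hr hle1 h1 hn, ?_⟩
    intro T hT
    obtain ⟨hrw, hcl⟩ := hook_rowcol_valley lam n r hr hle1 h1 hn T hT
    exact SkewSYT.ext' (funext fun k => hrw k) (funext fun k => hcl k)
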